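/- Let T : H → H be nonexpansive with Fix T ≠ ∅, and let (λ_n), (β_n) satisfy: 0 < β_n ≤ 1, β_n → 1, ∑(1-β_n) = +∞, ∑|β_n - β_{n-1}| < +∞; and 0 < λ_n ≤ 1, liminf λ_n > 0, ∑|λ_n - λ_{n-1}| < +∞. Then the sequence generated by x_{n+1} = β_n x_n + λ_n(T(β_n x_n) - β_n x_n) from any x_0 ∈ H converges strongly to the projection of 0 onto Fix T, i.e. to the minimal norm fixed point of T. -/

import Mathlib

open Filter Topology


/-- Xu's lemma: recursive inequality with vanishing perturbations. -/
lemma xu_recursion (a γ δ c : ℕ → ℝ)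
    (ha : ∀ n, 0 ≤ a n) (hγ0 : ∀ n, 0 ≤ γ n) (hγ1 : ∀ n, γ n ≤ 1)
    (hdiv : ¬ Summable γ) (hc : Summable c) (hc0 : ∀ n, 0 ≤ c n)
    (hδ : ∀ ε > 0, ∀ᶠ n in atTop, δ n ≤ ε)
    (hrec : ∀ n, a (n + 1) ≤ (1 - γ n) * a n + γ n * δ n + c n) :
    Tendsto a atTop (𝓝 0) := by
  rw [Metric.tendsto_atTop]
  intro ε hε
  have hε4 : 0 < ε / 4 := by linarith
  -- choose N₁ : δ n ≤ ε/4 for n ≥ N₁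
  obtain ⟨N₁, hN₁⟩ := (hδ (ε / 4) hε4).exists_forall_of_atTop
  -- partial sums of c
  have hcsum := hc.hasSum.tendsto_sum_nat
  set S := ∑' n, c n with hS
  -- choose N₂ ≥ N₁ with S - (partial sum up to N₂) ≤ ε/4
  have htail : Tendsto (fun n => S - ∑ i ∈ Finset.range n, c i) atTop (𝓝 0) := by
    simpa using (tendsto_const_nhds (x := S)).sub hcsum
  have h2 : ∀ᶠ n in atTop, S - ∑ i ∈ Finset.range n, c i < ε / 4 :=
    htail.eventually (eventually_lt_nhds hε4)
  obtain ⟨N₂, hN₂⟩ := (h2.and (eventually_ge_atTop N₁)).exists_forall_of_atTop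
  set N := N₂
  have hNN₁ : N₁ ≤ N := (hN₂ N le_rfl).2
  -- tail sums are ≤ ε/4
  have htailsum : ∀ n, ∑ i ∈ Finset.Ico N n, c i ≤ ε / 4 := by
    intro n
    rcases le_or_gt N n with h | h
    · have hmono : ∑ i ∈ Finset.range n, c i ≤ S :=
        Summable.sum_le_tsum _ (fun i _ => hc0 i) hc
      have : ∑ i ∈ Finset.Ico N n, c i
          = ∑ i ∈ Finset.range n, c i - ∑ i ∈ Finset.range N, c i := by
        rw [Finset.sum_Ico_eq_sub _ h]
      have h3 := (hN₂ N le_rfl).1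
      linarith [this]
    · rw [Finset.Ico_eq_empty (by omega)]
      simp; linarith
  -- main induction: a n ≤ P n * a N + ε/4 + tail sums, where P n = ∏ over [N, n)
  set P : ℕ → ℝ := fun n => ∏ k ∈ Finset.Ico N n, (1 - γ k) with hP
  have hP0 : ∀ n, 0 ≤ P n := fun n =>
    Finset.prod_nonneg (fun k _ => by linarith [hγ1 k])
  have key : ∀ n, N ≤ n → a n ≤ P n * a N + ε / 4 + ∑ i ∈ Finset.Ico N n, c i := by
    intro n hn
    induction n with
    | zero => 
      have : N = 0 := by omega
      subst this
      simp [hP]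
      linarith [ha 0]
    | succ m ih =>
      rcases Nat.lt_or_ge m N with h | h
      · -- m + 1 = N
        have : N = m + 1 := by omega
        subst this
        simp [hP]
        simp [N]
        linarith [ha (m+1)]
      · have ihm := ih h
        have hδm : δ m ≤ ε / 4 := hN₁ m (le_trans hNN₁ h)
        have hPsucc : P (m + 1) = P m * (1 - γ m) := by
          exact Finset.prod_Ico_succ_top (f := fun k => 1 - γ k) h
        have hcsucc : ∑ i ∈ Finset.Ico N (m + 1), c i
            = (∑ i ∈ Finset.Ico N m, c i) + c m := by
          rw [Finset.sum_Ico_succ_top h]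
        have h1 : a (m + 1) ≤ (1 - γ m) * a m + γ m * (ε / 4) + c m := by
          have := hrec m
          have : γ m * δ m ≤ γ m * (ε / 4) :=
            mul_le_mul_of_nonneg_left hδm (hγ0 m)
          linarith [hrec m]
        have hγm : 0 ≤ 1 - γ m := by linarith [hγ1 m]
        have h2 : (1 - γ m) * a m ≤ (1 - γ m) * (P m * a N + ε / 4 + ∑ i ∈ Finset.Ico N m, c i) :=
          mul_le_mul_of_nonneg_left ihm hγm
        have hcs0 : 0 ≤ ∑ i ∈ Finset.Ico N m, c i :=
          Finset.sum_nonneg (fun i _ => hc0 i)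
        have hPa : 0 ≤ P m * a N := mul_nonneg (hP0 m) (ha N)
        rw [hPsucc, hcsucc]
        nlinarith [hγ0 m, hγ1 m]
  -- P n * a N → 0
  have hsum : Tendsto (fun n => ∑ i ∈ Finset.range n, γ i) atTop atTop :=
    (not_summable_iff_tendsto_nat_atTop_of_nonneg hγ0).mp hdiv
  have hPbound : ∀ n, P n ≤ Real.exp (-(∑ i ∈ Finset.Ico N n, γ i)) := by
    intro n
    have : P n ≤ ∏ k ∈ Finset.Ico N n, Real.exp (-(γ k)) := by
      apply Finset.prod_le_prod (fun k _ => by linarith [hγ1 k])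
      intro k _
      have := Real.add_one_le_exp (-(γ k))
      linarith
    calc P n ≤ ∏ k ∈ Finset.Ico N n, Real.exp (-(γ k)) := this
      _ = Real.exp (∑ k ∈ Finset.Ico N n, -(γ k)) := (Real.exp_sum _ _).symm
      _ = Real.exp (-(∑ k ∈ Finset.Ico N n, γ k)) := by rw [Finset.sum_neg_distrib]
  have hIcoSum : Tendsto (fun n => ∑ i ∈ Finset.Ico N n, γ i) atTop atTop := by
    have hev : ∀ᶠ n in atTop, ∑ i ∈ Finset.Ico N n, γ i
        = ∑ i ∈ Finset.range n, γ i - ∑ i ∈ Finset.range N, γ i := by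
      filter_upwards [eventually_ge_atTop N] with n hn
      rw [Finset.sum_Ico_eq_sub _ hn]
    refine Tendsto.congr' (hev.mono fun n h => h.symm) (hsum.atTop_add tendsto_const_nhds)
  have hPNto : Tendsto (fun n => Real.exp (-(∑ i ∈ Finset.Ico N n, γ i)) * a N) atTop (𝓝 0) := by
    have h1 : Tendsto (fun n => Real.exp (-(∑ i ∈ Finset.Ico N n, γ i))) atTop (𝓝 0) :=
      Real.tendsto_exp_neg_atTop_nhds_zero.comp hIcoSum
    simpa using h1.mul_const (a N)
  have hsmall : ∀ᶠ n in atTop, Real.exp (-(∑ i ∈ Finset.Ico N n, γ i)) * a N < ε / 4 := by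
    have := hPNto.eventually (eventually_lt_nhds hε4)
    simpa using this
  obtain ⟨N₃, hN₃⟩ := (hsmall.and (eventually_ge_atTop N)).exists_forall_of_atTop
  refine ⟨N₃, fun n hn => ?_⟩
  obtain ⟨hs, hge⟩ := hN₃ n hn
  have h1 := key n hge
  have h2 : P n * a N ≤ Real.exp (-(∑ i ∈ Finset.Ico N n, γ i)) * a N :=
    mul_le_mul_of_nonneg_right (hPbound n) (ha N)
  have h3 := htailsum n
  have : a n < ε := by linarith
  rw [Real.dist_eq, sub_zero, abs_of_nonneg (ha n)]
  exact this

section Geom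
variable {H : Type*} [NormedAddCommGroup H] [InnerProductSpace ℝ H]

/-- Parallelogram identity for midpoints. -/
lemma midpt_norm_sq (u a b : H) :
    ‖u - (2:ℝ)⁻¹ • (a + b)‖ ^ 2
      = ‖u - a‖ ^ 2 / 2 + ‖u - b‖ ^ 2 / 2 - ‖a - b‖ ^ 2 / 4 := by
  have h := parallelogram_law_with_norm ℝ (u - a) (u - b)
  have e1 : (u - a) + (u - b) = (2:ℝ) • (u - (2:ℝ)⁻¹ • (a + b)) := by
    rw [smul_sub, smul_smul]
    norm_num
    module
  have e2 : (u - a) - (u - b) = b - a := by abel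
  rw [e1, e2, norm_smul] at h
  simp only [Real.norm_ofNat] at h
  have e3 : ‖b - a‖ = ‖a - b‖ := norm_sub_rev b a
  rw [e3] at h
  nlinarith [h]

lemma fixed_midpoint (T : H → H) (hT : ∀ x y : H, ‖T x - T y‖ ≤ ‖x - y‖)
    {a b : H} (ha : T a = a) (hb : T b = b) :
    T ((2:ℝ)⁻¹ • (a + b)) = (2:ℝ)⁻¹ • (a + b) := by
  set m := (2:ℝ)⁻¹ • (a + b) with hm
  have h1 : ‖T m - m‖ ^ 2 = ‖T m - a‖ ^ 2 / 2 + ‖T m - b‖ ^ 2 / 2 - ‖a - b‖ ^ 2 / 4 :=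
    midpt_norm_sq (T m) a b
  have h2 : ‖T m - a‖ ≤ ‖m - a‖ := by have := hT m a; rwa [ha] at this
  have h3 : ‖T m - b‖ ≤ ‖m - b‖ := by have := hT m b; rwa [hb] at this
  have e1 : m - a = (2:ℝ)⁻¹ • (b - a) := by rw [hm]; module
  have e2 : m - b = (2:ℝ)⁻¹ • (a - b) := by rw [hm]; module
  have e3 : ‖m - a‖ = ‖a - b‖ / 2 := by
    rw [e1, norm_smul, norm_sub_rev b a]; norm_num; ring
  have e4 : ‖m - b‖ = ‖a - b‖ / 2 := by
    rw [e2, norm_smul]; norm_num; ring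
  have h4 : ‖T m - m‖ ^ 2 ≤ 0 := by
    rw [h1]
    nlinarith [norm_nonneg (T m - a), norm_nonneg (T m - b), norm_nonneg (m - a), norm_nonneg (m - b)]
  have h5 : ‖T m - m‖ = 0 := by
    nlinarith [norm_nonneg (T m - m)]
  have := norm_eq_zero.mp h5
  rwa [sub_eq_zero] at this

/-- One relaxation step of a nonexpansive map does not increase distance to a fixed point. -/
lemma relax_le (T : H → H) (hT : ∀ x y : H, ‖T x - T y‖ ≤ ‖x - y‖)
    {q : H} (hq : T q = q) (w : H) {l : ℝ} (hl0 : 0 ≤ l) (hl1 : l ≤ 1) :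
    ‖w + l • (T w - w) - q‖ ≤ ‖w - q‖ := by
  have e : w + l • (T w - w) - q = (1 - l) • (w - q) + l • (T w - q) := by module
  rw [e]
  calc ‖(1 - l) • (w - q) + l • (T w - q)‖
      ≤ ‖(1 - l) • (w - q)‖ + ‖l • (T w - q)‖ := norm_add_le _ _
    _ = (1 - l) * ‖w - q‖ + l * ‖T w - q‖ := by
        rw [norm_smul, norm_smul, Real.norm_eq_abs, Real.norm_eq_abs,
          abs_of_nonneg (by linarith), abs_of_nonneg hl0]
    _ ≤ (1 - l) * ‖w - q‖ + l * ‖w - q‖ := by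
        have : ‖T w - q‖ ≤ ‖w - q‖ := by have := hT w q; rwa [hq] at this
        nlinarith
    _ = ‖w - q‖ := by ring

end Geom

/-- Every bounded real sequence has a limit along an ultrafilter. -/
lemma ulim_exists (U : Ultrafilter ℕ) (g : ℕ → ℝ) {M : ℝ} (hg : ∀ k, |g k| ≤ M) :
    ∃ a, Tendsto g U (𝓝 a) := by
  have hc : IsCompact (Set.Icc (-M) M) := isCompact_Icc
  have hle : (U.map g : Filter ℝ) ≤ Filter.principal (Set.Icc (-M) M) := by
    rw [Ultrafilter.coe_map, Filter.le_principal_iff, Filter.mem_map]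
    have : ∀ k, g k ∈ Set.Icc (-M) M := fun k => abs_le.mp (hg k)
    exact Filter.univ_mem' this
  obtain ⟨a, _, ha⟩ := hc.ultrafilter_le_nhds (U.map g) hle
  exact ⟨a, ha⟩

/-- Asymptotic center of a bounded sequence with vanishing residual is a fixed point,
and satisfies a variational inequality. -/
lemma asymptotic_center {H : Type*} [NormedAddCommGroup H] [InnerProductSpace ℝ H]
    [CompleteSpace H]
    (T : H → H) (hT : ∀ x y : H, ‖T x - T y‖ ≤ ‖x - y‖)
    (u : ℕ → H) {M : ℝ} (hu : ∀ k, ‖u k‖ ≤ M)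
    (hres : Tendsto (fun k => ‖u k - T (u k)‖) atTop (𝓝 0)) :
    ∃ z : H, T z = z ∧ ∀ v : H, ∀ ε > 0, ∃ᶠ k in atTop, (inner ℝ (u k - z) v : ℝ) < ε := by
  set U : Ultrafilter ℕ := Ultrafilter.of atTop with hU
  have hUle : (U : Filter ℕ) ≤ atTop := Ultrafilter.of_le atTop
  set f : H → ℕ → ℝ := fun z k => ‖u k - z‖ ^ 2 with hf
  have hfb : ∀ z k, |f z k| ≤ (M + ‖z‖) ^ 2 := by
    intro z k
    have h1 : ‖u k - z‖ ≤ M + ‖z‖ :=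
      le_trans (norm_sub_le _ _) (by linarith [hu k])
    rw [abs_of_nonneg (sq_nonneg _)]
    exact pow_le_pow_left₀ (norm_nonneg _) h1 2
  set φ : H → ℝ := fun z => limUnder (U : Filter ℕ) (f z) with hφdef
  have hφ : ∀ z, Tendsto (f z) U (𝓝 (φ z)) := by
    intro z
    obtain ⟨a, ha⟩ := ulim_exists U (f z) (hfb z)
    have : φ z = a := ha.limUnder_eq
    rw [this]; exact ha
  have hφ0 : ∀ z, 0 ≤ φ z := fun z =>
    ge_of_tendsto' (hφ z) (fun k => sq_nonneg _)
  have hbdd : BddBelow (Set.range φ) := ⟨0, by rintro y ⟨z, rfl⟩; exact hφ0 z⟩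
  set m : ℝ := ⨅ z, φ z with hm
  have hm_le : ∀ z, m ≤ φ z := fun z => ciInf_le hbdd z
  -- midpoint identity for φ
  have hmid : ∀ y z : H, φ ((2:ℝ)⁻¹ • (y + z))
      = φ y / 2 + φ z / 2 - ‖y - z‖ ^ 2 / 4 := by
    intro y z
    have h1 : Tendsto (fun k => f y k / 2 + f z k / 2 - ‖y - z‖ ^ 2 / 4) U
        (𝓝 (φ y / 2 + φ z / 2 - ‖y - z‖ ^ 2 / 4)) :=
      (((hφ y).div_const 2).add ((hφ z).div_const 2)).sub tendsto_const_nhds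
    have h2 : (fun k => f y k / 2 + f z k / 2 - ‖y - z‖ ^ 2 / 4)
        = f ((2:ℝ)⁻¹ • (y + z)) := by
      funext k
      exact (midpt_norm_sq (u k) y z).symm
    rw [h2] at h1
    exact tendsto_nhds_unique (hφ _) h1
  -- minimizing sequence
  have hzs : ∀ j : ℕ, ∃ z, φ z < m + 1 / (j + 1) := by
    intro j
    apply exists_lt_of_ciInf_lt
    have : (0:ℝ) < 1 / (j + 1) := by positivity
    linarith
  choose zs hzsp using hzs
  have hcauchy_sq : ∀ i j : ℕ, ‖zs i - zs j‖ ^ 2 ≤ 2 * (1 / (i + 1)) + 2 * (1 / (j + 1)) := by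
    intro i j
    have h1 := hm_le ((2:ℝ)⁻¹ • (zs i + zs j))
    rw [hmid (zs i) (zs j)] at h1
    have h2 := hzsp i
    have h3 := hzsp j
    linarith
  have hCauchy : CauchySeq zs := by
    rw [Metric.cauchySeq_iff']
    intro ε hε
    obtain ⟨N, hN⟩ := exists_nat_gt (4 / ε ^ 2)
    refine ⟨N, fun n hn => ?_⟩
    have h1 := hcauchy_sq n N
    have hN1 : (0:ℝ) < N + 1 := by positivity
    have hn1 : (0:ℝ) < n + 1 := by positivity
    have h2 : (1:ℝ) / (n + 1) ≤ 1 / (N + 1) := by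
      apply one_div_le_one_div_of_le hN1
      have : (N:ℝ) ≤ n := Nat.cast_le.mpr hn
      linarith
    have h4 : (4:ℝ) * (1 / (N + 1)) < ε ^ 2 := by
      have h5 : 4 / ε ^ 2 < (N:ℝ) := hN
      have h6 : (0:ℝ) < ε ^ 2 := by positivity
      rw [div_lt_iff₀ h6] at h5
      rw [mul_one_div, div_lt_iff₀ hN1]
      nlinarith
    have h7 : ‖zs n - zs N‖ ^ 2 < ε ^ 2 := by linarith
    have := lt_of_pow_lt_pow_left₀ 2 (le_of_lt hε) h7
    rwa [dist_eq_norm]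
  obtain ⟨z, hz⟩ := cauchySeq_tendsto_of_complete hCauchy
  -- φ (zs j) → m
  have hone : Tendsto (fun j : ℕ => 1 / ((j:ℝ) + 1)) atTop (𝓝 0) :=
    tendsto_one_div_add_atTop_nhds_zero_nat
  have hφzs : Tendsto (fun j => φ (zs j)) atTop (𝓝 m) := by
    apply tendsto_of_tendsto_of_tendsto_of_le_of_le
      (tendsto_const_nhds) (by simpa using tendsto_const_nhds.add hone)
      (fun j => hm_le (zs j)) (fun j => (hzsp j).le)
  -- φ z = m
  have hdz : Tendsto (fun j => ‖zs j - z‖) atTop (𝓝 0) := by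
    exact tendsto_iff_norm_sub_tendsto_zero.mp hz
  have hφz_le : φ z ≤ m := by
    have key : ∀ j, φ z ≤ (Real.sqrt (φ (zs j)) + ‖zs j - z‖) ^ 2 := by
      intro j
      have hnormT : Tendsto (fun k => ‖u k - zs j‖) U (𝓝 (Real.sqrt (φ (zs j)))) := by
        have := (hφ (zs j)).sqrt
        simpa [hf, Real.sqrt_sq (norm_nonneg _)] using this
      have hrhs : Tendsto (fun k => (‖u k - zs j‖ + ‖zs j - z‖) ^ 2) U
          (𝓝 ((Real.sqrt (φ (zs j)) + ‖zs j - z‖) ^ 2)) :=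
        (hnormT.add tendsto_const_nhds).pow 2
      refine le_of_tendsto_of_tendsto' (hφ z) hrhs (fun k => ?_)
      have htri : ‖u k - z‖ ≤ ‖u k - zs j‖ + ‖zs j - z‖ := by
        have := dist_triangle (u k) (zs j) z
        simpa [dist_eq_norm] using this
      exact pow_le_pow_left₀ (norm_nonneg _) htri 2
    have hrhsT : Tendsto (fun j => (Real.sqrt (φ (zs j)) + ‖zs j - z‖) ^ 2) atTop
        (𝓝 ((Real.sqrt m + 0) ^ 2)) :=
      (hφzs.sqrt.add hdz).pow 2
    have : (Real.sqrt m + 0) ^ 2 = m := by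
      rw [add_zero, Real.sq_sqrt]
      exact le_ciInf (fun z => hφ0 z)
    rw [this] at hrhsT
    exact ge_of_tendsto' hrhsT key
  have hφz : φ z = m := le_antisymm hφz_le (hm_le z)
  -- T z is also a minimizer
  have hφTz_le : φ (T z) ≤ φ z := by
    have hnormT : Tendsto (fun k => ‖u k - z‖) U (𝓝 (Real.sqrt (φ z))) := by
      have := (hφ z).sqrt
      simpa [hf, Real.sqrt_sq (norm_nonneg _)] using this
    have hres' : Tendsto (fun k => ‖u k - T (u k)‖) U (𝓝 0) :=
      hres.mono_left hUle
    have hrhs : Tendsto (fun k => (‖u k - T (u k)‖ + ‖u k - z‖) ^ 2) U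
        (𝓝 ((0 + Real.sqrt (φ z)) ^ 2)) := (hres'.add hnormT).pow 2
    have heq : (0 + Real.sqrt (φ z)) ^ 2 = φ z := by
      rw [zero_add, Real.sq_sqrt (hφ0 z)]
    rw [heq] at hrhs
    refine le_of_tendsto_of_tendsto' (hφ (T z)) hrhs (fun k => ?_)
    have htri : ‖u k - T z‖ ≤ ‖u k - T (u k)‖ + ‖u k - z‖ := by
      have h1 : ‖u k - T z‖ ≤ ‖u k - T (u k)‖ + ‖T (u k) - T z‖ := by
        have := dist_triangle (u k) (T (u k)) (T z)
        simpa [dist_eq_norm] using this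
      have h2 := hT (u k) z
      linarith
    exact pow_le_pow_left₀ (norm_nonneg _) htri 2
  have hφTz : φ (T z) = m := le_antisymm (hφz ▸ hφTz_le) (hm_le (T z))
  have hfix : T z = z := by
    have h1 := hm_le ((2:ℝ)⁻¹ • (z + T z))
    rw [hmid z (T z), hφz, hφTz] at h1
    have h2 : ‖z - T z‖ ^ 2 ≤ 0 := by linarith
    have h3 : ‖z - T z‖ = 0 := by
      nlinarith [norm_nonneg (z - T z)]
    have := norm_eq_zero.mp h3
    rw [sub_eq_zero] at this
    exact this.symm
  refine ⟨z, hfix, ?_⟩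
  -- variational inequality
  intro v ε hε
  by_contra hcon
  rw [Filter.not_frequently] at hcon
  have hev : ∀ᶠ k in atTop, ε ≤ (inner ℝ (u k - z) v : ℝ) := by
    filter_upwards [hcon] with k hk
    exact not_lt.mp hk
  rcases eq_or_ne v 0 with rfl | hv
  · obtain ⟨k, hk⟩ := hev.exists
    rw [inner_zero_right] at hk
    linarith
  · have hvn : (0:ℝ) < ‖v‖ ^ 2 := pow_pos (norm_pos_iff.mpr hv) 2
    set t : ℝ := ε / ‖v‖ ^ 2 with ht
    have ht0 : 0 < t := div_pos hε hvn
    have hptw : ∀ᶠ k in (U : Filter ℕ),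
        f (z + t • v) k ≤ f z k - 2 * t * ε + t ^ 2 * ‖v‖ ^ 2 := by
      filter_upwards [hev.filter_mono hUle] with k hk
      have e1 : u k - (z + t • v) = (u k - z) - t • v := by abel
      have e2 : ‖(u k - z) - t • v‖ ^ 2
          = ‖u k - z‖ ^ 2 - 2 * (t * inner ℝ (u k - z) v) + t ^ 2 * ‖v‖ ^ 2 := by
        rw [norm_sub_sq_real, real_inner_smul_right, norm_smul,
          Real.norm_eq_abs, mul_pow, sq_abs]
      have e3 : f (z + t • v) k = ‖u k - z‖ ^ 2 - 2 * (t * inner ℝ (u k - z) v)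
          + t ^ 2 * ‖v‖ ^ 2 := by
        simp only [hf]
        rw [e1, e2]
      rw [e3]
      have : t * ε ≤ t * inner ℝ (u k - z) v := mul_le_mul_of_nonneg_left hk ht0.le
      simp only [hf]
      linarith
    have hlim : φ (z + t • v) ≤ φ z - 2 * t * ε + t ^ 2 * ‖v‖ ^ 2 := by
      refine le_of_tendsto_of_tendsto (hφ (z + t • v))
        (((hφ z).sub tendsto_const_nhds).add tendsto_const_nhds) ?_
      exact hptw
    have heval : t ^ 2 * ‖v‖ ^ 2 = ε * t := by
      rw [ht]; field_simp
    have h2te : 2 * t * ε = 2 * (ε * t) := by ring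
    have hlt : φ (z + t • v) < m := by
      have := hm_le (z + t • v)
      rw [hφz] at hlim
      nlinarith [mul_pos hε ht0]
    exact absurd (hm_le (z + t • v)) (not_le.mpr hlt)

/-- The minimal norm fixed point `p` satisfies `⟪p, p - z⟫ ≤ 0` for any fixed point `z`. -/
lemma minnorm_inner {H : Type*} [NormedAddCommGroup H] [InnerProductSpace ℝ H]
    (T : H → H) (hT : ∀ x y : H, ‖T x - T y‖ ≤ ‖x - y‖)
    (p : H) (hp : T p = p) (hpmin : ∀ q : H, T q = q → ‖p‖ ≤ ‖q‖)
    (z : H) (hz : T z = z) : (inner ℝ p (p - z) : ℝ) ≤ 0 := by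
  -- dyadic points q k = p + (1/2)^k • (z - p) are fixed points
  set q : ℕ → H := fun k => Nat.rec z (fun _ w => (2:ℝ)⁻¹ • (p + w)) k with hq
  have hq0 : q 0 = z := rfl
  have hqs : ∀ k, q (k + 1) = (2:ℝ)⁻¹ • (p + q k) := fun k => rfl
  have hqfix : ∀ k, T (q k) = q k := by
    intro k
    induction k with
    | zero => rw [hq0]; exact hz
    | succ n ih => rw [hqs n]; exact fixed_midpoint T hT hp ih
  have hqform : ∀ k, q k = p + ((2:ℝ)⁻¹) ^ k • (z - p) := by
    intro k
    induction k with
    | zero => rw [hq0]; simp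
    | succ n ih =>
      rw [hqs n, ih, pow_succ]
      module
  have hkey : ∀ k, 0 ≤ 2 * (inner ℝ p (z - p) : ℝ) + ((2:ℝ)⁻¹) ^ k * ‖z - p‖ ^ 2 := by
    intro k
    set t : ℝ := ((2:ℝ)⁻¹) ^ k with htdef
    have ht0 : 0 < t := by positivity
    have h1 : ‖p‖ ≤ ‖q k‖ := hpmin (q k) (hqfix k)
    have h2 : ‖q k‖ ^ 2 = ‖p‖ ^ 2 + 2 * (t * inner ℝ p (z - p)) + t ^ 2 * ‖z - p‖ ^ 2 := by
      rw [hqform k, norm_add_sq_real, real_inner_smul_right, norm_smul,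
        Real.norm_eq_abs, mul_pow, sq_abs]
    have h3 : ‖p‖ ^ 2 ≤ ‖q k‖ ^ 2 := pow_le_pow_left₀ (norm_nonneg _) h1 2
    rw [h2] at h3
    have h4 : 0 ≤ 2 * (t * inner ℝ p (z - p)) + t ^ 2 * ‖z - p‖ ^ 2 := by linarith
    have h5 : 0 ≤ t * (2 * inner ℝ p (z - p) + t * ‖z - p‖ ^ 2) := by ring_nf; ring_nf at h4; linarith
    exact nonneg_of_mul_nonneg_right (b := 2 * (inner ℝ p (z - p) : ℝ) + t * ‖z - p‖ ^ 2) (by linarith [h5]) ht0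
  have htend : Tendsto (fun k : ℕ => ((2:ℝ)⁻¹) ^ k * ‖z - p‖ ^ 2) atTop (𝓝 0) := by
    have h1 : Tendsto (fun k : ℕ => ((2:ℝ)⁻¹) ^ k) atTop (𝓝 0) :=
      tendsto_pow_atTop_nhds_zero_of_lt_one (by norm_num) (by norm_num)
    simpa using h1.mul_const (‖z - p‖ ^ 2)
  have h7 : (0:ℝ) ≤ 2 * inner ℝ p (z - p) := by
    have := ge_of_tendsto' (by simpa using (tendsto_const_nhds (x := 2 * (inner ℝ p (z - p) : ℝ))).add htend) hkey
    simpa using this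
  have h8 : (inner ℝ p (p - z) : ℝ) = - inner ℝ p (z - p) := by
    rw [inner_sub_right, inner_sub_right]; ring
  rw [h8]
  linarith

lemma convex_norm_le {H : Type*} [NormedAddCommGroup H] [NormedSpace ℝ H]
    {s K : ℝ} (h0 : 0 ≤ s) (h1 : s ≤ 1) {w w' : H} (hw : ‖w‖ ≤ K) (hw' : ‖w'‖ ≤ K) :
    ‖(1 - s) • w + s • w'‖ ≤ K := by
  calc ‖(1 - s) • w + s • w'‖ ≤ ‖(1 - s) • w‖ + ‖s • w'‖ := norm_add_le _ _
    _ = (1 - s) * ‖w‖ + s * ‖w'‖ := by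
        rw [norm_smul, norm_smul, Real.norm_eq_abs, Real.norm_eq_abs,
          abs_of_nonneg (by linarith), abs_of_nonneg h0]
    _ ≤ (1 - s) * K + s * K := by
        have t1 : (1 - s) * ‖w‖ ≤ (1 - s) * K := mul_le_mul_of_nonneg_left hw (by linarith)
        have t2 : s * ‖w'‖ ≤ s * K := mul_le_mul_of_nonneg_left hw' h0
        linarith
    _ = K := by ring

set_option maxHeartbeats 1600000 in
/-- Strong convergence of the modified Krasnosel'skii–Mann algorithm
`x (n+1) = β n • x n + λ n • (T (β n • x n) - β n • x n)` to the minimal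
norm fixed point of the nonexpansive mapping `T` (the projection of `0`
onto `Fix T`). -/
theorem modKM_strong_convergence
    {H : Type*} [NormedAddCommGroup H] [InnerProductSpace ℝ H] [CompleteSpace H]
    (T : H → H) (hT : ∀ x y : H, ‖T x - T y‖ ≤ ‖x - y‖)
    (hfix_ne : {z : H | T z = z}.Nonempty)
    (β lam : ℕ → ℝ)
    (hβ : ∀ n, 0 < β n ∧ β n ≤ 1)
    (hβlim : Tendsto β atTop (nhds 1))
    (hβdiv : ¬ Summable (fun n => 1 - β n))
    (hβvar : Summable (fun n => |β (n + 1) - β n|))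
    (hlam : ∀ n, 0 < lam n ∧ lam n ≤ 1)
    (hlaminf : 0 < Filter.liminf lam Filter.atTop)
    (hlamvar : Summable (fun n => |lam (n + 1) - lam n|))
    (x : ℕ → H)
    (hiter : ∀ n, x (n + 1) = β n • x n + lam n • (T (β n • x n) - β n • x n))
    (p : H) (hp : T p = p) (hpmin : ∀ q : H, T q = q → ‖p‖ ≤ ‖q‖) :
    Tendsto x atTop (nhds p) := by
  have hβ0 : ∀ n, 0 < β n := fun n => (hβ n).1
  have hβ1 : ∀ n, β n ≤ 1 := fun n => (hβ n).2
  have hl0 : ∀ n, 0 < lam n := fun n => (hlam n).1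
  have hl1 : ∀ n, lam n ≤ 1 := fun n => (hlam n).2
  -- one step bound
  have hstep : ∀ n, ‖x (n + 1) - p‖ ≤ ‖β n • x n - p‖ := by
    intro n
    rw [hiter n]
    exact relax_le T hT hp (β n • x n) (hl0 n).le (hl1 n)
  have hy : ∀ n, ‖β n • x n - p‖ ≤ β n * ‖x n - p‖ + (1 - β n) * ‖p‖ := by
    intro n
    have e : β n • x n - p = β n • (x n - p) + (β n - 1) • p := by module
    rw [e]
    calc ‖β n • (x n - p) + (β n - 1) • p‖
        ≤ ‖β n • (x n - p)‖ + ‖(β n - 1) • p‖ := norm_add_le _ _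
      _ = β n * ‖x n - p‖ + (1 - β n) * ‖p‖ := by
          rw [norm_smul, norm_smul, Real.norm_eq_abs, Real.norm_eq_abs,
            abs_of_nonneg (hβ0 n).le, abs_of_nonpos (by linarith [hβ1 n])]
          ring
  -- boundedness
  set R : ℝ := max ‖x 0 - p‖ ‖p‖ with hRdef
  have hpR : ‖p‖ ≤ R := le_max_right _ _
  have hR : ∀ n, ‖x n - p‖ ≤ R := by
    intro n
    induction n with
    | zero => exact le_max_left _ _
    | succ n ih =>
      have h1 := hstep n
      have h2 := hy n
      have h3 := hβ0 n
      have h4 := hβ1 n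
      nlinarith [norm_nonneg (x n - p)]
  set M : ℝ := R + ‖p‖ with hMdef
  have hR0 : 0 ≤ R := le_trans (norm_nonneg p) hpR
  have hM0 : 0 ≤ M := by positivity
  have hMx : ∀ n, ‖x n‖ ≤ M := by
    intro n
    have := norm_sub_norm_le (x n) p
    have := hR n
    rw [hMdef]
    linarith [norm_sub_norm_le (x n) p]
  have hMy : ∀ n, ‖β n • x n‖ ≤ M := by
    intro n
    rw [norm_smul, Real.norm_eq_abs, abs_of_nonneg (hβ0 n).le]
    nlinarith [hMx n, hβ0 n, hβ1 n, norm_nonneg (x n)]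
  have hMTy : ∀ n, ‖T (β n • x n)‖ ≤ M + 2 * ‖p‖ := by
    intro n
    have h1 : ‖T (β n • x n) - p‖ ≤ ‖β n • x n - p‖ := by
      have := hT (β n • x n) p; rwa [hp] at this
    have h2 : ‖β n • x n - p‖ ≤ ‖β n • x n‖ + ‖p‖ := norm_sub_le _ _
    have h3 := norm_sub_norm_le (T (β n • x n)) p
    linarith [hMy n]
  -- Step 2 : successive differences tend to zero
  have hdiff : Tendsto (fun n => ‖x (n + 1) - x n‖) atTop (𝓝 0) := by
    apply xu_recursion (fun n => ‖x (n + 1) - x n‖) (fun n => 1 - β (n + 1)) (fun _ => 0)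
      (fun n => M * |β (n + 1) - β n| + (2 * M + 2 * ‖p‖) * |lam (n + 1) - lam n|)
      (fun n => norm_nonneg _)
      (fun n => by show (0:ℝ) ≤ 1 - β (n + 1); linarith [hβ1 (n + 1)])
      (fun n => by show (1:ℝ) - β (n + 1) ≤ 1; linarith [hβ0 (n + 1)])
      (fun h => hβdiv ((summable_nat_add_iff 1).mp h))
      ((hβvar.mul_left M).add (hlamvar.mul_left (2 * M + 2 * ‖p‖)))
      (fun n => by positivity)
      (fun ε hε => Filter.Eventually.of_forall (fun n => by show (0:ℝ) ≤ ε; linarith))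
    intro n
    show ‖x (n + 1 + 1) - x (n + 1)‖
      ≤ (1 - (1 - β (n + 1))) * ‖x (n + 1) - x n‖ + (1 - β (n + 1)) * 0
        + (M * |β (n + 1) - β n| + (2 * M + 2 * ‖p‖) * |lam (n + 1) - lam n|)
    set b := β n with hb
    set b' := β (n + 1) with hb'
    set l := lam n with hl
    set l' := lam (n + 1) with hl'
    set A := T (b' • x (n + 1)) with hA
    set B := T (b' • x n) with hB
    set C := T (b • x n) with hC
    have hdecomp : x (n + 2) - x (n + 1)
        = ((1 - l') • (b' • x (n + 1) - b' • x n) + l' • (A - B))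
          + ((1 - l') • (b' • x n - b • x n) + l' • (B - C))
          + ((l - l') • (b • x n) + (l' - l) • C) := by
      have e1 : x (n + 2) = b' • x (n + 1) + l' • (A - b' • x (n + 1)) := hiter (n + 1)
      have e2 : x (n + 1) = b • x n + l • (C - b • x n) := hiter n
      rw [e1, e2]
      module
    have hpart1 : ‖(1 - l') • (b' • x (n + 1) - b' • x n) + l' • (A - B)‖
        ≤ b' * ‖x (n + 1) - x n‖ := by
      apply convex_norm_le (hl0 (n + 1)).le (hl1 (n + 1))
      · rw [← smul_sub, norm_smul, Real.norm_eq_abs, abs_of_nonneg (hβ0 (n + 1)).le]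
      · have h1 := hT (b' • x (n + 1)) (b' • x n)
        rw [← smul_sub, norm_smul, Real.norm_eq_abs, abs_of_nonneg (hβ0 (n + 1)).le] at h1
        exact h1
    have hpart2 : ‖(1 - l') • (b' • x n - b • x n) + l' • (B - C)‖
        ≤ |b' - b| * M := by
      apply convex_norm_le (hl0 (n + 1)).le (hl1 (n + 1))
      · have e : b' • x n - b • x n = (b' - b) • x n := by module
        rw [e, norm_smul, Real.norm_eq_abs]
        exact mul_le_mul_of_nonneg_left (hMx n) (abs_nonneg _)
      · have h1 := hT (b' • x n) (b • x n)
        have e : b' • x n - b • x n = (b' - b) • x n := by module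
        rw [e, norm_smul, Real.norm_eq_abs] at h1
        exact le_trans h1 (mul_le_mul_of_nonneg_left (hMx n) (abs_nonneg _))
    have hpart3 : ‖(l - l') • (b • x n) + (l' - l) • C‖
        ≤ |l' - l| * (2 * M + 2 * ‖p‖) := by
      have t0 : ‖(l - l') • (b • x n)‖ = |l' - l| * ‖b • x n‖ := by
        rw [norm_smul, Real.norm_eq_abs, abs_sub_comm]
      have t0' : ‖(l' - l) • C‖ = |l' - l| * ‖C‖ := by
        rw [norm_smul, Real.norm_eq_abs]
      have t1 := mul_le_mul_of_nonneg_left (hMy n) (abs_nonneg (l' - l))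
      have t2 := mul_le_mul_of_nonneg_left (hMTy n) (abs_nonneg (l' - l))
      have t3 := norm_add_le ((l - l') • (b • x n)) ((l' - l) • C)
      rw [t0, t0'] at t3
      have : |l' - l| * M + |l' - l| * (M + 2 * ‖p‖) = |l' - l| * (2 * M + 2 * ‖p‖) := by ring
      linarith
    calc ‖x (n + 1 + 1) - x (n + 1)‖
        = ‖x (n + 2) - x (n + 1)‖ := rfl
      _ ≤ ‖(1 - l') • (b' • x (n + 1) - b' • x n) + l' • (A - B)‖
          + ‖(1 - l') • (b' • x n - b • x n) + l' • (B - C)‖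
          + ‖(l - l') • (b • x n) + (l' - l) • C‖ := by
            rw [hdecomp]
            have t1 := norm_add_le
              (((1 - l') • (b' • x (n + 1) - b' • x n) + l' • (A - B))
                + ((1 - l') • (b' • x n - b • x n) + l' • (B - C)))
              ((l - l') • (b • x n) + (l' - l) • C)
            have t2 := norm_add_le
              ((1 - l') • (b' • x (n + 1) - b' • x n) + l' • (A - B))
              ((1 - l') • (b' • x n - b • x n) + l' • (B - C))
            linarith
      _ ≤ b' * ‖x (n + 1) - x n‖ + |b' - b| * M + |l' - l| * (2 * M + 2 * ‖p‖) := by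
            linarith
      _ ≤ (1 - (1 - β (n + 1))) * ‖x (n + 1) - x n‖ + (1 - β (n + 1)) * 0
          + (M * |β (n + 1) - β n| + (2 * M + 2 * ‖p‖) * |lam (n + 1) - lam n|) := by
            rw [← hb', ← hb, ← hl', ← hl]
            ring_nf
            try linarith
  -- Step 3: residuals tend to zero
  obtain ⟨c, hc0, hcev⟩ : ∃ c > 0, ∀ᶠ n in atTop, c < lam n := by
    refine ⟨liminf lam atTop / 2, by linarith, ?_⟩
    exact eventually_lt_of_lt_liminf (by linarith)
      ⟨0, Filter.eventually_map.mpr (Filter.Eventually.of_forall fun n => (hl0 n).le)⟩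
  have hb0 : Tendsto (fun n => 1 - β n) atTop (𝓝 0) := by
    simpa using (tendsto_const_nhds (x := (1:ℝ))).sub hβlim
  have hxy : Tendsto (fun n => ‖x n - β n • x n‖) atTop (𝓝 0) := by
    apply squeeze_zero' (Filter.Eventually.of_forall fun n => norm_nonneg _)
      (g := fun n => (1 - β n) * M)
      (Filter.Eventually.of_forall (fun n => ?_))
    · simpa using hb0.mul_const M
    · have e : x n - β n • x n = (1 - β n) • x n := by module
      rw [e, norm_smul, Real.norm_eq_abs, abs_of_nonneg (by linarith [hβ1 n])]
      exact mul_le_mul_of_nonneg_left (hMx n) (by linarith [hβ1 n])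
  have hyTy : Tendsto (fun n => ‖β n • x n - T (β n • x n)‖) atTop (𝓝 0) := by
    have hnum : Tendsto (fun n => c⁻¹ * (‖x (n + 1) - x n‖ + ‖x n - β n • x n‖))
        atTop (𝓝 0) := by
      simpa using (hdiff.add hxy).const_mul c⁻¹
    apply squeeze_zero' (Filter.Eventually.of_forall fun n => norm_nonneg _) ?_ hnum
    filter_upwards [hcev] with n hcn
    have e : x (n + 1) - β n • x n = lam n • (T (β n • x n) - β n • x n) := by
      rw [hiter n]; abel
    have e2 : ‖x (n + 1) - β n • x n‖ = lam n * ‖T (β n • x n) - β n • x n‖ := by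
      rw [e, norm_smul, Real.norm_eq_abs, abs_of_pos (hl0 n)]
    have e3 : lam n * ‖T (β n • x n) - β n • x n‖
        ≤ ‖x (n + 1) - x n‖ + ‖x n - β n • x n‖ := by
      rw [← e2]
      have := dist_triangle (x (n + 1)) (x n) (β n • x n)
      simpa [dist_eq_norm] using this
    have e4 : ‖β n • x n - T (β n • x n)‖ = ‖T (β n • x n) - β n • x n‖ :=
      norm_sub_rev _ _
    rw [e4]
    have hmul : c * ‖T (β n • x n) - β n • x n‖ ≤ lam n * ‖T (β n • x n) - β n • x n‖ :=
      mul_le_mul_of_nonneg_right hcn.le (norm_nonneg _)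
    calc ‖T (β n • x n) - β n • x n‖
        = c⁻¹ * (c * ‖T (β n • x n) - β n • x n‖) := by field_simp
      _ ≤ c⁻¹ * (‖x (n + 1) - x n‖ + ‖x n - β n • x n‖) :=
          mul_le_mul_of_nonneg_left (by linarith) (inv_nonneg.mpr hc0.le)
  have hres : Tendsto (fun n => ‖x n - T (x n)‖) atTop (𝓝 0) := by
    have hnum : Tendsto (fun n => 2 * ‖x n - β n • x n‖
        + ‖β n • x n - T (β n • x n)‖) atTop (𝓝 0) := by
      simpa using (hxy.const_mul 2).add hyTy
    apply squeeze_zero' (Filter.Eventually.of_forall fun n => norm_nonneg _)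
      (Filter.Eventually.of_forall (fun n => ?_)) hnum
    have t1 := dist_triangle (x n) (β n • x n) (T (x n))
    have t2 := dist_triangle (β n • x n) (T (β n • x n)) (T (x n))
    have t3 := hT (β n • x n) (x n)
    simp only [dist_eq_norm] at t1 t2
    have t4 : ‖T (β n • x n) - T (x n)‖ ≤ ‖x n - β n • x n‖ := by
      rw [norm_sub_rev (β n • x n) (x n)] at t3
      exact t3
    linarith
  -- Step 4: limsup inequality via asymptotic centers
  have hls : ∀ ε > 0, ∀ᶠ n in atTop, (inner ℝ p (p - x n) : ℝ) < ε := by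
    by_contra hcon
    push_neg at hcon
    obtain ⟨ε, hε, hfreq⟩ := hcon
    have hfreq' : ∃ᶠ n in atTop, ε ≤ (inner ℝ p (p - x n) : ℝ) := by
      have := Filter.not_eventually.mp hfreq
      simpa [not_lt] using this
    obtain ⟨σ, hσmono, hσ⟩ := extraction_of_frequently_atTop hfreq'
    have hub : ∀ k, ‖x (σ k)‖ ≤ M := fun k => hMx (σ k)
    have hures : Tendsto (fun k => ‖x (σ k) - T (x (σ k))‖) atTop (𝓝 0) :=
      hres.comp hσmono.tendsto_atTop
    obtain ⟨z, hzfix, hvar⟩ := asymptotic_center T hT (fun k => x (σ k)) hub hures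
    have hpz : (inner ℝ p (p - z) : ℝ) ≤ 0 := minnorm_inner T hT p hp hpmin z hzfix
    obtain ⟨k, hk⟩ := (hvar (-p) ε hε).exists
    have hco : (inner ℝ p (p - x (σ k)) : ℝ)
        = inner ℝ p (p - z) + inner ℝ (x (σ k) - z) (-p) := by
      simp only [inner_sub_right, inner_sub_left, inner_neg_right]
      rw [real_inner_comm (x (σ k)) p, real_inner_comm z p]
      ring
    have h1 := hσ k
    rw [hco] at h1
    linarith
  -- Step 5: conclusion
  have hsq : Tendsto (fun n => ‖x n - p‖ ^ 2) atTop (𝓝 0) := by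
    apply xu_recursion (fun n => ‖x n - p‖ ^ 2) (fun n => 1 - β n)
      (fun n => 2 * β n * (inner ℝ p (p - x n) : ℝ) + (1 - β n) * ‖p‖ ^ 2)
      (fun _ => 0)
      (fun n => sq_nonneg _)
      (fun n => by show (0:ℝ) ≤ 1 - β n; linarith [hβ1 n])
      (fun n => by show (1:ℝ) - β n ≤ 1; linarith [hβ0 n])
      hβdiv summable_zero (fun n => le_rfl)
    · -- the δ-term is eventually small
      intro ε hε
      have hb2 : Tendsto (fun n => (1 - β n) * ‖p‖ ^ 2) atTop (𝓝 0) := by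
        simpa using hb0.mul_const (‖p‖ ^ 2)
      filter_upwards [hls (ε / 4) (by linarith),
        hb2.eventually (eventually_lt_nhds (show (0:ℝ) < ε / 2 by linarith))] with n h1 h2
      have hβn0 := hβ0 n
      have hβn1 := hβ1 n
      have h3 : 2 * β n * (inner ℝ p (p - x n) : ℝ) ≤ ε / 2 := by
        rcases le_or_gt 0 ((inner ℝ p (p - x n) : ℝ)) with h | h
        · nlinarith
        · nlinarith
      linarith
    · -- the recursion
      intro n
      show ‖x (n + 1) - p‖ ^ 2 ≤ (1 - (1 - β n)) * ‖x n - p‖ ^ 2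
        + (1 - β n) * (2 * β n * (inner ℝ p (p - x n) : ℝ) + (1 - β n) * ‖p‖ ^ 2) + 0
      have h1 : ‖x (n + 1) - p‖ ^ 2 ≤ ‖β n • x n - p‖ ^ 2 :=
        pow_le_pow_left₀ (norm_nonneg _) (hstep n) 2
      have e : β n • x n - p = β n • (x n - p) + (β n - 1) • p := by module
      have h2 : ‖β n • x n - p‖ ^ 2 = (β n) ^ 2 * ‖x n - p‖ ^ 2
          + 2 * (β n * (β n - 1) * (inner ℝ (x n - p) p : ℝ)) + (1 - β n) ^ 2 * ‖p‖ ^ 2 := by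
        rw [e, norm_add_sq_real, real_inner_smul_left, real_inner_smul_right,
          norm_smul, norm_smul, Real.norm_eq_abs, Real.norm_eq_abs,
          mul_pow, mul_pow, sq_abs, sq_abs]
        ring
      have h3 : (inner ℝ (x n - p) p : ℝ) = - inner ℝ p (p - x n) := by
        simp only [inner_sub_right, inner_sub_left]
        rw [real_inner_comm (x n) p]
        ring
      rw [h3] at h2
      have hβn0 := hβ0 n
      have hβn1 := hβ1 n
      have hb2 : (β n) ^ 2 ≤ β n := by nlinarith
      have h4 : (β n) ^ 2 * ‖x n - p‖ ^ 2 ≤ β n * ‖x n - p‖ ^ 2 :=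
        mul_le_mul_of_nonneg_right hb2 (sq_nonneg ‖x n - p‖)
      nlinarith [h1, h2, h4]
  have hnorm : Tendsto (fun n => ‖x n - p‖) atTop (𝓝 0) := by
    have := hsq.sqrt
    simpa [Real.sqrt_sq (norm_nonneg _)] using this
  exact tendsto_iff_norm_sub_tendsto_zero.mpr hnorm
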